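/- Let v_1, ..., v_6 be unit vectors in ℝ³ that are equiangular with common angle β = 1/√5. Then there exists z ∈ ℂ with |z| = 1 such that the matrices U_i := I_3 − (1−z)·v_i v_iᵀ ∈ M_3(ℂ) are unitary and pairwise trace-orthogonal, i.e. tr(U_i* U_j) = 0 for all i ≠ j. -/

import Mathlib

open Matrix

/-- The complex rank-one projection `v vᵀ` associated to a real vector `v`. -/
noncomputable def realProj {d : ℕ} (v : Fin d → ℝ) : Matrix (Fin d) (Fin d) ℂ :=
  (Matrix.vecMulVec v v).map Complex.ofReal

lemma realProj_conjT {d : ℕ} (v : Fin d → ℝ) : (realProj v)ᴴ = realProj v := by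
  ext i j
  simp [realProj, conjTranspose_apply, vecMulVec_apply, mul_comm]

lemma realProj_mul {d : ℕ} (u w : Fin d → ℝ) :
    realProj u * realProj w
      = ((u ⬝ᵥ w : ℝ) : ℂ) • (Matrix.vecMulVec u w).map Complex.ofReal := by
  ext i j
  simp only [realProj, Matrix.mul_apply, Matrix.map_apply, vecMulVec_apply,
    Matrix.smul_apply, dotProduct, smul_eq_mul]
  push_cast
  rw [Finset.sum_mul]
  congr 1
  ext m
  ring

lemma trace_map_vecMulVec {d : ℕ} (u w : Fin d → ℝ) :
    Matrix.trace ((Matrix.vecMulVec u w).map Complex.ofReal) = ((u ⬝ᵥ w : ℝ) : ℂ) := by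
  simp [Matrix.trace, Matrix.diag, vecMulVec_apply, dotProduct]

lemma realProj_trace {d : ℕ} (u : Fin d → ℝ) :
    Matrix.trace (realProj u) = ((u ⬝ᵥ u : ℝ) : ℂ) :=
  trace_map_vecMulVec u u

theorem bravyi_smolin_unitaries
    (v : Fin 6 → (Fin 3 → ℝ))
    (hunit : ∀ i, v i ⬝ᵥ v i = 1)
    (hang : ∀ i j, i ≠ j → |v i ⬝ᵥ v j| = 1 / Real.sqrt 5) :
    ∃ z : ℂ, ‖z‖ = 1 ∧
      (∀ i, (1 - (1 - z) • realProj (v i)) ∈ Matrix.unitaryGroup (Fin 3) ℂ) ∧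
      (∀ i j, i ≠ j →
        Matrix.trace ((1 - (1 - z) • realProj (v i))ᴴ * (1 - (1 - z) • realProj (v j))) = 0) := by
  set z : ℂ := ⟨-7/8, Real.sqrt 15 / 8⟩ with hz
  have h15 : Real.sqrt 15 ^ 2 = 15 := Real.sq_sqrt (by norm_num)
  have hns : Complex.normSq z = 1 := by
    simp only [Complex.normSq_mk, hz]
    nlinarith [h15]
  have habs : ‖z‖ = 1 := by
    rw [Complex.norm_def, hns, Real.sqrt_one]
  have hzz : z * (starRingEnd ℂ) z = 1 := by
    rw [Complex.mul_conj, hns, Complex.ofReal_one]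
  have hre : z + (starRingEnd ℂ) z = (-7/4 : ℂ) := by
    rw [Complex.add_conj, hz]
    norm_num
  -- projection facts
  clear_value z
  have hPsq : ∀ i, realProj (v i) * realProj (v i) = realProj (v i) := by
    intro i
    rw [realProj_mul, hunit i]
    simp [realProj]
  have hPT : ∀ i, (realProj (v i))ᴴ = realProj (v i) := fun i => realProj_conjT _
  have hU : ∀ i, ((1 : Matrix (Fin 3) (Fin 3) ℂ) - (1 - z) • realProj (v i))ᴴ
      = 1 - (1 - (starRingEnd ℂ) z) • realProj (v i) := by
    intro i
    simp [conjTranspose_sub, conjTranspose_smul, hPT]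
  refine ⟨z, habs, ?_, ?_⟩
  · intro i
    rw [Matrix.mem_unitaryGroup_iff]
    show _ * _ᴴ = _
    rw [hU i]
    set P := realProj (v i)
    have expand : (1 - (1 - z) • P) * (1 - (1 - (starRingEnd ℂ) z) • P)
        = 1 - (1 - (starRingEnd ℂ) z) • P - (1 - z) • P
          + ((1 - z) * (1 - (starRingEnd ℂ) z)) • P := by
      rw [sub_mul, mul_sub, mul_sub, one_mul, mul_one, smul_mul_smul_comm, hPsq i]
      simp only [one_mul]
      abel
    rw [expand]
    have hc : (1 - z) * (1 - (starRingEnd ℂ) z) = (1 - (starRingEnd ℂ) z) + (1 - z) := by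
      linear_combination hzz
    rw [hc, add_smul]
    abel
  · intro i j hij
    rw [hU i]
    have expand : (1 - (1 - (starRingEnd ℂ) z) • realProj (v i)) * (1 - (1 - z) • realProj (v j))
        = 1 - (1 - z) • realProj (v j) - (1 - (starRingEnd ℂ) z) • realProj (v i)
          + ((1 - (starRingEnd ℂ) z) * (1 - z)) • (realProj (v i) * realProj (v j)) := by
      rw [sub_mul, mul_sub, mul_sub, one_mul, mul_one, smul_mul_smul_comm]
      simp only [one_mul]
      abel
    rw [expand]
    have hsq : ((v i ⬝ᵥ v j : ℝ) : ℂ) * ((v i ⬝ᵥ v j : ℝ) : ℂ) = 1/5 := by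
      have := hang i j hij
      have h5 : (v i ⬝ᵥ v j) * (v i ⬝ᵥ v j) = 1/5 := by
        have := congrArg (fun x => x * x) this
        simp only [abs_mul_abs_self] at this
        rw [this]
        rw [div_mul_div_comm, one_mul, Real.mul_self_sqrt (by norm_num)]
      calc ((v i ⬝ᵥ v j : ℝ) : ℂ) * ((v i ⬝ᵥ v j : ℝ) : ℂ)
          = (((v i ⬝ᵥ v j) * (v i ⬝ᵥ v j) : ℝ) : ℂ) := by push_cast; ring
        _ = 1/5 := by rw [h5]; norm_num
    have htr : Matrix.trace (realProj (v i) * realProj (v j)) = 1/5 := by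
      rw [realProj_mul, Matrix.trace_smul, trace_map_vecMulVec, smul_eq_mul, hsq]
    rw [Matrix.trace_add, Matrix.trace_sub, Matrix.trace_sub, Matrix.trace_smul,
      Matrix.trace_smul, Matrix.trace_smul, Matrix.trace_one, realProj_trace,
      realProj_trace, hunit i, hunit j, htr]
    simp only [Complex.ofReal_one, smul_eq_mul, mul_one, Fintype.card_fin]
    push_cast
    linear_combination (1/5 : ℂ) * hzz + (4/5 : ℂ) * hre
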